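/- Fix l ∈ ℕ, l ≥ 1, and let K_l : [0,∞) → [0,1] be the folding map K_l(x) = lx − 2i on [2i/l, (2i+1)/l] and K_l(x) = −lx + 2i on [(2i−1)/l, 2i/l]. Let p : [0,∞) → ℝ be a probability density of bounded variation (p ≥ 0, ∫_{[0,∞)} p = 1, total variation V(p) < ∞), and let d_l be the Radon–Nikodym derivative with respect to Lebesgue measure of the pushforward under K_l of the measure with density p. Then ∫_{[0,1]} |d_l(x) − 1| dx ≤ 2·V(p)/l. -/

import Mathlib

open MeasureTheory

/-- The folding map `K_l : [0,∞) → [0,1]`, `K_l(x) = lx − 2i` on `[2i/l,(2i+1)/l]`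
and `K_l(x) = −lx + 2i` on `[(2i−1)/l, 2i/l]`; equivalently
`K_l(x) = 1 − |((lx) mod 2) − 1|`. -/
noncomputable def foldMap (l : ℕ) (x : ℝ) : ℝ :=
  1 - |2 * Int.fract ((l : ℝ) * x / 2) - 1|

namespace FoldAux

open Set
open scoped ENNReal

noncomputable def brP (l k : ℕ) (y : ℝ) : ℝ :=
  (if Even k then (k : ℝ) + y else (k : ℝ) + 1 - y) / l

noncomputable def sden (l : ℕ) (p : ℝ → ℝ) (y : ℝ) : ℝ≥0∞ :=
  (∑' k : ℕ, ENNReal.ofReal (p (brP l k y))) / l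

lemma measurable_foldMap (l : ℕ) : Measurable (foldMap l) := by
  unfold foldMap
  exact measurable_const.sub (((measurable_const.mul
    (measurable_fract.comp ((measurable_id.const_mul _).div_const 2))).sub
    measurable_const).abs)

lemma lpos {l : ℕ} (hl : 1 ≤ l) : (0:ℝ) < l := by exact_mod_cast hl

lemma foldMap_on_branch {l : ℕ} (hl : 1 ≤ l) (k : ℕ) {x : ℝ}
    (hx : x ∈ Ico ((k:ℝ)/l) (((k:ℝ)+1)/l)) :
    foldMap l x = if Even k then (l:ℝ)*x - k else (k:ℝ)+1 - (l:ℝ)*x := by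
  have hL := lpos hl
  obtain ⟨h1, h2⟩ := hx
  rw [div_le_iff₀ hL] at h1
  rw [lt_div_iff₀ hL] at h2
  rw [mul_comm] at h1 h2
  rcases Nat.even_or_odd k with hev | hodd
  · obtain ⟨i, hi⟩ := hev
    have hk : (k:ℝ) = 2*i := by rw [hi]; push_cast; ring
    rw [hk] at h1 h2 ⊢
    have hfl : ⌊(l:ℝ)*x/2⌋ = (i:ℤ) := by
      rw [Int.floor_eq_iff]
      constructor
      · push_cast; linarith
      · push_cast; linarith
    have hfr : Int.fract ((l:ℝ)*x/2) = (l:ℝ)*x/2 - i := by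
      rw [Int.fract, hfl]; push_cast; ring
    rw [if_pos ⟨i, hi⟩]
    simp only [foldMap, hfr]
    rw [abs_of_nonpos (by linarith)]
    ring
  · obtain ⟨i, hi⟩ := hodd
    have hk : (k:ℝ) = 2*i+1 := by rw [hi]; push_cast; ring
    rw [hk] at h1 h2 ⊢
    have hfl : ⌊(l:ℝ)*x/2⌋ = (i:ℤ) := by
      rw [Int.floor_eq_iff]
      constructor
      · push_cast; linarith
      · push_cast; linarith
    have hfr : Int.fract ((l:ℝ)*x/2) = (l:ℝ)*x/2 - i := by
      rw [Int.fract, hfl]; push_cast; ring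
    rw [if_neg (by rw [hi]; exact (Nat.not_even_iff_odd).mpr ⟨i, rfl⟩)]
    simp only [foldMap, hfr]
    rw [abs_of_nonneg (by linarith)]
    ring

lemma brP_mem_Icc {l : ℕ} (hl : 1 ≤ l) (k : ℕ) {y : ℝ} (hy : y ∈ Icc (0:ℝ) 1) :
    brP l k y ∈ Icc ((k:ℝ)/l) (((k:ℝ)+1)/l) := by
  have hL := lpos hl
  obtain ⟨h1, h2⟩ := hy
  unfold brP
  split <;> constructor <;> gcongr <;> linarith

end FoldAux
section test
open MeasureTheory Set
open scoped ENNReal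
namespace FoldAux2

lemma brP_even {l k : ℕ} (hk : Even k) :
    FoldAux.brP l k = fun y => (1/(l:ℝ))*y + (k:ℝ)/l := by
  funext y; simp only [FoldAux.brP, if_pos hk]; ring

lemma brP_odd {l k : ℕ} (hk : ¬ Even k) :
    FoldAux.brP l k = fun y => (-(1/(l:ℝ)))*y + ((k:ℝ)+1)/l := by
  funext y; simp only [FoldAux.brP, if_neg hk]; ring

lemma lintegral_affine {c d : ℝ} (hc : c ≠ 0) {H : ℝ → ℝ≥0∞} (hH : Measurable H) :
    ∫⁻ y, H (c*y + d) = ENNReal.ofReal |c⁻¹| * ∫⁻ x, H x := by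
  have hT : Measurable fun y : ℝ => c*y + d := (measurable_id.const_mul c).add_const d
  have h1 : Measure.map (fun y : ℝ => c*y + d) volume
      = ENNReal.ofReal |c⁻¹| • volume := by
    have hcomp : (fun y : ℝ => c*y + d) = (fun y : ℝ => y + d) ∘ (c * ·) := rfl
    rw [hcomp, ← Measure.map_map (measurable_add_const d) (measurable_const_mul c),
      Real.map_volume_mul_left hc, Measure.map_smul,
      map_add_right_eq_self volume d]
  rw [← lintegral_map hH hT, h1, lintegral_smul_measure, smul_eq_mul]

end FoldAux2
end test
section t2
open MeasureTheory Set
open scoped ENNReal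
namespace FoldAux

lemma iUnion_Ico (l : ℕ) (hl : 1 ≤ l) :
    (⋃ k : ℕ, Ico ((k:ℝ)/l) (((k:ℝ)+1)/l)) = Ici (0:ℝ) := by
  have hL := lpos hl
  ext x
  simp only [mem_iUnion, mem_Ico, mem_Ici]
  constructor
  · rintro ⟨k, h1, -⟩
    exact le_trans (by positivity) h1
  · intro hx
    have h0 : (0:ℤ) ≤ ⌊(l:ℝ)*x⌋ := Int.floor_nonneg.mpr (by positivity)
    have hfl : ((⌊(l:ℝ)*x⌋.toNat : ℕ) : ℝ) = ((⌊(l:ℝ)*x⌋ : ℤ) : ℝ) := by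
      exact_mod_cast congrArg (fun z : ℤ => (z : ℝ)) (Int.toNat_of_nonneg h0)
    refine ⟨⌊(l:ℝ)*x⌋.toNat, ?_, ?_⟩
    · rw [div_le_iff₀ hL, hfl]
      calc ((⌊(l:ℝ)*x⌋ : ℤ) : ℝ) ≤ (l:ℝ)*x := Int.floor_le _
      _ = x * l := by ring
    · rw [lt_div_iff₀ hL]
      calc x * l = (l:ℝ)*x := by ring
      _ < ⌊(l:ℝ)*x⌋ + 1 := Int.lt_floor_add_one _
      _ = (⌊(l:ℝ)*x⌋.toNat : ℝ) + 1 := by rw [hfl]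

lemma pairwise_disjoint_Ico (l : ℕ) (hl : 1 ≤ l) :
    Pairwise fun k m : ℕ =>
      Disjoint (Ico ((k:ℝ)/l) (((k:ℝ)+1)/l)) (Ico ((m:ℝ)/l) (((m:ℝ)+1)/l)) := by
  have hL := lpos hl
  intro k m hkm
  rw [Set.Ico_disjoint_Ico]
  rcases lt_or_gt_of_ne hkm with h | h
  · apply min_le_of_left_le
    apply le_max_of_le_right
    gcongr
    exact_mod_cast h
  · apply min_le_of_right_le
    apply le_max_of_le_left
    gcongr
    exact_mod_cast h

lemma brP_mem_Ico_iff {l : ℕ} (hl : 1 ≤ l) (k : ℕ) (y : ℝ) :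
    brP l k y ∈ Ico ((k:ℝ)/l) (((k:ℝ)+1)/l)
      ↔ (if Even k then y ∈ Ico (0:ℝ) 1 else y ∈ Ioc (0:ℝ) 1) := by
  have hL := lpos hl
  unfold brP
  by_cases hk : Even k <;> simp only [if_pos, if_neg, hk, if_true, if_false, mem_Ico, mem_Ioc,
    div_le_div_iff_of_pos_right, div_lt_div_iff_of_pos_right]
  · rw [div_le_div_iff_of_pos_right hL, div_lt_div_iff_of_pos_right hL]
    constructor <;> rintro ⟨a, b⟩ <;> constructor <;> linarith
  · rw [div_le_div_iff_of_pos_right hL, div_lt_div_iff_of_pos_right hL]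
    constructor <;> rintro ⟨a, b⟩ <;> constructor <;> linarith

end FoldAux
end t2
section t3
open MeasureTheory Set
open scoped ENNReal
namespace FoldAux

lemma branch_eq {l : ℕ} (hl : 1 ≤ l) {p : ℝ → ℝ} (hm : Measurable p)
    (k : ℕ) {A : Set ℝ} (hA : MeasurableSet A) :
    ∫⁻ x in (foldMap l)⁻¹' A ∩ Ico ((k:ℝ)/l) (((k:ℝ)+1)/l), ENNReal.ofReal (p x)
      = ((l:ℝ≥0∞))⁻¹ * ∫⁻ y in A ∩ Icc (0:ℝ) 1, ENNReal.ofReal (p (brP l k y)) := by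
  have hL := lpos hl
  set I : Set ℝ := Ico ((k:ℝ)/l) (((k:ℝ)+1)/l) with hI
  set e : ℝ → ℝ := fun x => if Even k then (l:ℝ)*x - k else (k:ℝ)+1 - (l:ℝ)*x with he
  have hem : Measurable e := by
    by_cases hk : Even k <;> simp only [he, hk, if_true, if_false]
    · exact (measurable_id.const_mul _).sub measurable_const
    · exact measurable_const.sub (measurable_id.const_mul _)
  have hseteq : (foldMap l)⁻¹' A ∩ I = e⁻¹' A ∩ I := by
    ext x
    simp only [mem_inter_iff, mem_preimage, and_congr_left_iff]
    intro hx
    rw [foldMap_on_branch hl k hx]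
  have hPm : Measurable fun x => ENNReal.ofReal (p x) :=
    ENNReal.measurable_ofReal.comp hm
  have hGm : Measurable ((e⁻¹' A ∩ I).indicator fun x => ENNReal.ofReal (p x)) :=
    hPm.indicator ((hem hA).inter measurableSet_Ico)
  have hsetm : MeasurableSet (e⁻¹' A ∩ I) := (hem hA).inter measurableSet_Ico
  rw [hseteq, ← lintegral_indicator hsetm]
  -- substitution
  have hlne : (l:ℝ≥0∞) ≠ 0 := by exact_mod_cast Nat.pos_of_ne_zero (by omega) |>.ne'
  have hltop : (l:ℝ≥0∞) ≠ ⊤ := ENNReal.natCast_ne_top l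
  set G : ℝ → ℝ≥0∞ := (e⁻¹' A ∩ I).indicator fun x => ENNReal.ofReal (p x) with hG
  have hsub : ∫⁻ x, G x = (l:ℝ≥0∞)⁻¹ * ∫⁻ y, G (brP l k y) := by
    have hids : ∀ c d : ℝ, c ≠ 0 → (fun y : ℝ => G (c*y+d)) = fun y => G (c*y+d) := fun _ _ _ => rfl
    by_cases hk : Even k
    · have hb := FoldAux2.brP_even (l := l) hk
      have := FoldAux2.lintegral_affine (c := 1/(l:ℝ)) (d := (k:ℝ)/l)
        (one_div_ne_zero hL.ne') hGm
      rw [hb]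
      simp only []
      rw [this]
      rw [← mul_assoc]
      rw [show |((1:ℝ)/l)⁻¹| = (l:ℝ) by rw [abs_of_nonneg] <;> simp [hL.le]]
      rw [ENNReal.ofReal_natCast, ENNReal.inv_mul_cancel hlne hltop, one_mul]
    · have hb := FoldAux2.brP_odd (l := l) hk
      have := FoldAux2.lintegral_affine (c := -(1/(l:ℝ))) (d := ((k:ℝ)+1)/l)
        (neg_ne_zero.mpr (one_div_ne_zero hL.ne')) hGm
      rw [hb]
      rw [this]
      rw [← mul_assoc]
      rw [show |(-((1:ℝ)/l))⁻¹| = (l:ℝ) by rw [abs_inv, abs_neg, abs_of_nonneg (by positivity)]; simp]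
      rw [ENNReal.ofReal_natCast, ENNReal.inv_mul_cancel hlne hltop, one_mul]
  rw [hsub]
  congr 1
  -- now: ∫⁻ y, G (brP l k y) = ∫⁻ y in A ∩ Icc 0 1, P (brP l k y)
  have hcomp : ∀ y : ℝ, e (brP l k y) = y := by
    intro y
    by_cases hk : Even k <;> simp only [he, brP, hk, if_true, if_false] <;> field_simp <;> ring
  set J : Set ℝ := if Even k then Ico (0:ℝ) 1 else Ioc (0:ℝ) 1 with hJ
  have hind : (fun y => G (brP l k y))
      = (A ∩ J).indicator fun y => ENNReal.ofReal (p (brP l k y)) := by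
    funext y
    have h1 : (brP l k y ∈ e⁻¹' A ∩ I) ↔ (y ∈ A ∩ J) := by
      rw [mem_inter_iff, mem_inter_iff, mem_preimage, hcomp y]
      constructor <;> rintro ⟨ha, hb⟩ <;> refine ⟨ha, ?_⟩
      · have := (brP_mem_Ico_iff hl k y).mp hb
        simp only [hJ]; split <;> simp_all
      · apply (brP_mem_Ico_iff hl k y).mpr
        simp only [hJ] at hb; split <;> simp_all
    by_cases hy : y ∈ A ∩ J
    · rw [Set.indicator_of_mem hy, hG]
      exact Set.indicator_of_mem (h1.mpr hy) _
    · rw [Set.indicator_of_notMem hy, hG]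
      exact Set.indicator_of_notMem (fun c => hy (h1.mp c)) _
  rw [hind, lintegral_indicator]
  · have hae : (A ∩ J : Set ℝ) =ᵐ[volume] (A ∩ Icc (0:ℝ) 1 : Set ℝ) := by
      apply Filter.EventuallyEq.inter (Filter.EventuallyEq.rfl)
      simp only [hJ]; split
      · exact Ico_ae_eq_Icc
      · exact Ioc_ae_eq_Icc
    rw [Measure.restrict_congr_set hae]
  · apply hA.inter
    simp only [hJ]; split
    · exact measurableSet_Ico
    · exact measurableSet_Ioc

end FoldAux
end t3
section t4
open MeasureTheory Set
open scoped ENNReal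
namespace FoldAux

lemma brP_measurable (l k : ℕ) : Measurable (brP l k) := by
  unfold brP
  by_cases hk : Even k <;> simp only [hk, if_true, if_false]
  · exact (measurable_const.add measurable_id).div_const _
  · exact (measurable_const.sub measurable_id).div_const _

lemma sden_measurable {l : ℕ} {p : ℝ → ℝ} (hm : Measurable p) : Measurable (sden l p) := by
  apply Measurable.div_const
  exact Measurable.ennreal_tsum fun k =>
    ENNReal.measurable_ofReal.comp (hm.comp (brP_measurable l k))

lemma lint_restrict_Ici {p : ℝ → ℝ} (hsupp : ∀ x < (0:ℝ), p x = 0)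
    {s : Set ℝ} (hs : MeasurableSet s) :
    ∫⁻ x in s, ENNReal.ofReal (p x) = ∫⁻ x in s ∩ Ici 0, ENNReal.ofReal (p x) := by
  rw [← lintegral_indicator hs, ← lintegral_indicator (hs.inter measurableSet_Ici)]
  congr 1
  funext x
  by_cases hx : x ∈ Ici (0:ℝ)
  · by_cases hxs : x ∈ s
    · rw [indicator_of_mem hxs, indicator_of_mem (mem_inter hxs hx)]
    · rw [indicator_of_notMem hxs, indicator_of_notMem (fun c => hxs c.1)]
  · have hx0 : p x = 0 := hsupp x (lt_of_not_ge hx)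
    by_cases hxs : x ∈ s
    · rw [indicator_of_mem hxs, indicator_of_notMem (fun c => hx c.2), hx0]
      simp
    · rw [indicator_of_notMem hxs, indicator_of_notMem (fun c => hxs c.1)]

lemma map_eq {l : ℕ} (hl : 1 ≤ l) {p : ℝ → ℝ} (hm : Measurable p)
    (hsupp : ∀ x < (0:ℝ), p x = 0) :
    (volume.withDensity fun y => ENNReal.ofReal (p y)).map (foldMap l)
      = volume.withDensity ((Icc (0:ℝ) 1).indicator (sden l p)) := by
  have hL := lpos hl
  have hlne : (l:ℝ≥0∞) ≠ 0 := by exact_mod_cast Nat.pos_of_ne_zero (by omega) |>.ne'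
  have hPm : Measurable fun x => ENNReal.ofReal (p x) := ENNReal.measurable_ofReal.comp hm
  apply Measure.ext
  intro A hA
  rw [Measure.map_apply (measurable_foldMap l) hA,
    withDensity_apply _ ((measurable_foldMap l) hA),
    withDensity_apply _ hA]
  rw [lint_restrict_Ici hsupp ((measurable_foldMap l) hA)]
  have hU : (foldMap l)⁻¹' A ∩ Ici 0
      = ⋃ k : ℕ, ((foldMap l)⁻¹' A ∩ Ico ((k:ℝ)/l) (((k:ℝ)+1)/l)) := by
    rw [← inter_iUnion, iUnion_Ico l hl]
  rw [hU, lintegral_iUnion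
    (fun k => ((measurable_foldMap l) hA).inter measurableSet_Ico)
    (fun k m hkm => ((pairwise_disjoint_Ico l hl) hkm).mono inter_subset_right inter_subset_right)]
  have hbr : ∀ k : ℕ, ∫⁻ x in (foldMap l)⁻¹' A ∩ Ico ((k:ℝ)/l) (((k:ℝ)+1)/l),
      ENNReal.ofReal (p x)
      = (l:ℝ≥0∞)⁻¹ * ∫⁻ y in A ∩ Icc (0:ℝ) 1, ENNReal.ofReal (p (brP l k y)) :=
    fun k => branch_eq hl hm k hA
  simp only [hbr]
  rw [ENNReal.tsum_mul_left]
  -- RHS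
  rw [← lintegral_indicator hA]
  have hindeq : ∀ y, (A.indicator ((Icc (0:ℝ) 1).indicator (sden l p))) y
      = (A ∩ Icc (0:ℝ) 1).indicator (sden l p) y := by
    intro y
    by_cases hy : y ∈ A ∩ Icc (0:ℝ) 1
    · rw [indicator_of_mem hy.1, indicator_of_mem hy.2, indicator_of_mem hy]
    · rw [indicator_of_notMem hy]
      by_cases hyA : y ∈ A
      · rw [indicator_of_mem hyA, indicator_of_notMem (fun c => hy (mem_inter hyA c))]
      · rw [indicator_of_notMem hyA]
  simp only [hindeq]
  rw [lintegral_indicator (hA.inter measurableSet_Icc)]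
  have hsd : ∀ y, sden l p y = (l:ℝ≥0∞)⁻¹ * ∑' k : ℕ, ENNReal.ofReal (p (brP l k y)) := by
    intro y; rw [sden, ENNReal.div_eq_inv_mul]
  simp only [hsd]
  have hm1 : ∀ k : ℕ, Measurable fun y => ENNReal.ofReal (p (brP l k y)) :=
    fun k => ENNReal.measurable_ofReal.comp (hm.comp (brP_measurable l k))
  have hmS : Measurable fun y => ∑' k : ℕ, ENNReal.ofReal (p (brP l k y)) :=
    Measurable.ennreal_tsum hm1
  rw [lintegral_const_mul _ hmS]
  congr 1
  rw [lintegral_tsum fun k => (hm1 k).aemeasurable]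

end FoldAux
end t4
section t5
open MeasureTheory Set Filter
open scoped ENNReal
namespace FoldAux

lemma mass {l : ℕ} (hl : 1 ≤ l) {p : ℝ → ℝ} (hm : Measurable p) (hpos : ∀ x, 0 ≤ p x)
    (hsupp : ∀ x < (0:ℝ), p x = 0) (hint : IntegrableOn p (Ici 0))
    (hnorm : ∫ x in Ici (0:ℝ), p x = 1) :
    ∫⁻ y in Icc (0:ℝ) 1, sden l p y = 1 := by
  have h := congrArg (fun μ : Measure ℝ => μ univ) (map_eq hl hm hsupp)
  simp only [Measure.map_apply (measurable_foldMap l) MeasurableSet.univ,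
    preimage_univ] at h
  rw [withDensity_apply _ MeasurableSet.univ, withDensity_apply _ MeasurableSet.univ] at h
  simp only [Measure.restrict_univ] at h
  rw [lintegral_indicator measurableSet_Icc] at h
  have hl1 : ∫⁻ x, ENNReal.ofReal (p x) = ∫⁻ x in Ici (0:ℝ), ENNReal.ofReal (p x) := by
    have h2 := lint_restrict_Ici (p := p) hsupp MeasurableSet.univ
    rw [univ_inter] at h2
    rw [← h2, Measure.restrict_univ]
  rw [hl1, ← ofReal_integral_eq_lintegral_ofReal hint
    (Filter.Eventually.of_forall fun x => hpos x), hnorm] at h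
  simpa using h.symm

lemma osc_sum_le {l : ℕ} (hl : 1 ≤ l) (p : ℝ → ℝ) {y y' : ℝ}
    (hy : y ∈ Icc (0:ℝ) 1) (hy' : y' ∈ Icc (0:ℝ) 1) :
    ∑' k : ℕ, edist (p (brP l k y)) (p (brP l k y')) ≤ eVariationOn p (Ici 0) := by
  have hL := lpos hl
  set a : ℕ → ℝ := fun k => brP l k y with haa
  set b : ℕ → ℝ := fun k => brP l k y' with hbb
  have ha : ∀ k : ℕ, a k ∈ Icc ((k:ℝ)/l) (((k:ℝ)+1)/l) := fun k => brP_mem_Icc hl k hy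
  have hb : ∀ k : ℕ, b k ∈ Icc ((k:ℝ)/l) (((k:ℝ)+1)/l) := fun k => brP_mem_Icc hl k hy'
  set w : ℕ → ℝ := fun i =>
    if i % 2 = 0 then min (a (i/2)) (b (i/2)) else max (a (i/2)) (b (i/2)) with hw
  have hcast : ∀ m : ℕ, ((m:ℝ)+1)/(l:ℝ) = (((m+1:ℕ)):ℝ)/(l:ℝ) := by
    intro m; push_cast; ring
  have hwmono : Monotone w := by
    apply monotone_nat_of_le_succ
    intro i
    by_cases hp : i % 2 = 0
    · have h2 : ¬ ((i+1) % 2 = 0) := by omega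
      have h3 : (i+1)/2 = i/2 := by omega
      simp only [hw, hp, h2, h3, if_true, if_false]
      exact min_le_max
    · have h2 : (i+1) % 2 = 0 := by omega
      have h3 : (i+1)/2 = i/2 + 1 := by omega
      simp only [hw, hp, h2, h3, if_true, if_false]
      set m := i/2 with hm
      have key : ∀ u ∈ Icc ((m:ℝ)/l) (((m:ℝ)+1)/l), ∀ v ∈ Icc (((m+1:ℕ):ℝ)/l) ((((m+1:ℕ):ℝ)+1)/l), u ≤ v := by
        intro u hu v hv
        calc u ≤ ((m:ℝ)+1)/l := hu.2
        _ = (((m+1:ℕ)):ℝ)/l := hcast m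
        _ ≤ v := hv.1
      apply max_le <;> apply le_min
      · exact key _ (ha m) _ (ha (m+1))
      · exact key _ (ha m) _ (hb (m+1))
      · exact key _ (hb m) _ (ha (m+1))
      · exact key _ (hb m) _ (hb (m+1))
  have hwmem : ∀ i, w i ∈ Ici (0:ℝ) := by
    intro i
    have h0 : (0:ℝ) ≤ ((i/2 : ℕ):ℝ)/l := by positivity
    have h1 : (0:ℝ) ≤ a (i/2) := h0.trans (ha _).1
    have h2 : (0:ℝ) ≤ b (i/2) := h0.trans (hb _).1
    simp only [hw]
    split
    · exact le_min h1 h2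
    · exact le_max_of_le_left h1
  have hpair : ∀ k : ℕ, edist (p (a k)) (p (b k)) = edist (p (w (2*k+1))) (p (w (2*k))) := by
    intro k
    have e1 : ¬ ((2*k+1) % 2 = 0) := by omega
    have e2 : (2*k+1)/2 = k := by omega
    have e3 : (2*k) % 2 = 0 := by omega
    have e4 : (2*k)/2 = k := by omega
    simp only [hw, e1, e2, e3, e4, if_true, if_false]
    rcases le_total (a k) (b k) with h | h
    · rw [min_eq_left h, max_eq_right h, edist_comm]
    · rw [min_eq_right h, max_eq_left h]
  rw [ENNReal.tsum_eq_iSup_nat]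
  apply iSup_le
  intro n
  calc ∑ k ∈ Finset.range n, edist (p (a k)) (p (b k))
      = ∑ k ∈ Finset.range n, edist (p (w (2*k+1))) (p (w (2*k))) :=
        Finset.sum_congr rfl fun k _ => hpair k
    _ ≤ ∑ i ∈ Finset.range (2*n), edist (p (w (i+1))) (p (w i)) := by
        induction n with
        | zero => simp
        | succ n ih =>
          rw [Finset.sum_range_succ,
            show 2*(n+1) = (2*n+1)+1 by ring, Finset.sum_range_succ,
            Finset.sum_range_succ]
          calc (∑ k ∈ Finset.range n, edist (p (w (2*k+1))) (p (w (2*k))))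
                + edist (p (w (2*n+1))) (p (w (2*n)))
              ≤ (∑ i ∈ Finset.range (2*n), edist (p (w (i+1))) (p (w i)))
                + edist (p (w (2*n+1))) (p (w (2*n))) := add_le_add_left ih _
            _ ≤ (∑ i ∈ Finset.range (2*n), edist (p (w (i+1))) (p (w i)))
                + edist (p (w (2*n+1))) (p (w (2*n)))
                + edist (p (w (2*n+1+1))) (p (w (2*n+1))) := le_self_add
    _ ≤ eVariationOn p (Ici 0) := eVariationOn.sum_le hwmono hwmem

end FoldAux
end t5
section t6
open MeasureTheory Set Filter
open scoped ENNReal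
namespace FoldAux

lemma tsum_le_tsum_add_var {l : ℕ} (hl : 1 ≤ l) (p : ℝ → ℝ) {y y' : ℝ}
    (hy : y ∈ Icc (0:ℝ) 1) (hy' : y' ∈ Icc (0:ℝ) 1) :
    (∑' k : ℕ, ENNReal.ofReal (p (brP l k y)))
      ≤ (∑' k : ℕ, ENNReal.ofReal (p (brP l k y'))) + eVariationOn p (Ici 0) := by
  have hpt : ∀ k : ℕ, ENNReal.ofReal (p (brP l k y))
      ≤ ENNReal.ofReal (p (brP l k y')) + edist (p (brP l k y)) (p (brP l k y')) := by
    intro k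
    set A := p (brP l k y); set B := p (brP l k y')
    have h1 : A ≤ B + dist A B := by
      have := le_abs_self (A - B)
      rw [Real.dist_eq]; linarith
    calc ENNReal.ofReal A ≤ ENNReal.ofReal (B + dist A B) := ENNReal.ofReal_le_ofReal h1
      _ ≤ ENNReal.ofReal B + ENNReal.ofReal (dist A B) := ENNReal.ofReal_add_le
      _ = ENNReal.ofReal B + edist A B := by rw [edist_dist]
  calc (∑' k : ℕ, ENNReal.ofReal (p (brP l k y)))
      ≤ ∑' k : ℕ, (ENNReal.ofReal (p (brP l k y')) + edist (p (brP l k y)) (p (brP l k y'))) :=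
        ENNReal.tsum_le_tsum hpt
    _ = (∑' k : ℕ, ENNReal.ofReal (p (brP l k y')))
        + ∑' k : ℕ, edist (p (brP l k y)) (p (brP l k y')) := ENNReal.tsum_add
    _ ≤ _ := add_le_add_right (osc_sum_le hl p hy hy') _

lemma sden_le_sden_add {l : ℕ} (hl : 1 ≤ l) (p : ℝ → ℝ) {y y' : ℝ}
    (hy : y ∈ Icc (0:ℝ) 1) (hy' : y' ∈ Icc (0:ℝ) 1) :
    sden l p y ≤ sden l p y' + eVariationOn p (Ici 0) / l := by
  rw [sden, sden, ← ENNReal.add_div]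
  exact ENNReal.div_le_div_right (tsum_le_tsum_add_var hl p hy hy') _

end FoldAux
end t6

open Set
open scoped ENNReal


/-- For `l ≥ 1` and a probability density `p` of bounded variation on
`[0,∞)`, the density `d_l` of the pushforward under `K_l` of the measure with density
`p` satisfies `∫₀¹ |d_l − 1| ≤ 2·V(p)/l`. -/
theorem foldMap_L1_rate_of_boundedVariation
    (l : ℕ) (hl : 1 ≤ l)
    (p : ℝ → ℝ) (hmeas : Measurable p) (hpos : ∀ x, 0 ≤ p x)
    (hsupp : ∀ x < (0 : ℝ), p x = 0)
    (hint : IntegrableOn p (Set.Ici (0 : ℝ)))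
    (hnorm : ∫ x in Set.Ici (0 : ℝ), p x = 1)
    (hbv : BoundedVariationOn p (Set.Ici (0 : ℝ))) :
    (∫ x in Set.Icc (0 : ℝ) 1,
      |((((volume.withDensity (fun y => ENNReal.ofReal (p y))).map
          (foldMap l)).rnDeriv volume) x).toReal - 1|)
      ≤ 2 * (eVariationOn p (Set.Ici (0 : ℝ))).toReal / l := by
  classical
  have hL := FoldAux.lpos hl
  have hlne : ((l:ℝ≥0∞)) ≠ 0 := by exact_mod_cast (Nat.pos_of_ne_zero (by omega)).ne'
  set V : ℝ≥0∞ := eVariationOn p (Set.Ici (0:ℝ)) with hV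
  have hVne : V ≠ ⊤ := hbv
  have hdivne : V / (l:ℝ≥0∞) ≠ ⊤ := (ENNReal.div_lt_top hVne hlne).ne
  have hQm : Measurable ((Set.Icc (0:ℝ) 1).indicator (FoldAux.sden l p)) :=
    (FoldAux.sden_measurable hmeas).indicator measurableSet_Icc
  have hmap := FoldAux.map_eq hl hmeas hsupp
  have hmass : ∫⁻ y in Set.Icc (0:ℝ) 1, FoldAux.sden l p y = 1 :=
    FoldAux.mass hl hmeas hpos hsupp hint hnorm
  have hfinae : ∀ᵐ y ∂(volume.restrict (Set.Icc (0:ℝ) 1)), FoldAux.sden l p y < ⊤ :=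
    ae_lt_top (FoldAux.sden_measurable hmeas) (by rw [hmass]; exact ENNReal.one_ne_top)
  have hne : (volume.restrict (Set.Icc (0:ℝ) 1)) ≠ 0 := by
    intro h
    have h2 := congrArg (fun μ : Measure ℝ => μ (Set.Icc (0:ℝ) 1)) h
    simp [Measure.restrict_apply, Real.volume_Icc] at h2
  have : (ae (volume.restrict (Set.Icc (0:ℝ) 1))).NeBot := ae_neBot.mpr hne
  obtain ⟨y₀, hy₀mem, hy₀fin⟩ := ((ae_restrict_mem measurableSet_Icc).and hfinae).exists
  have hfin : ∀ y ∈ Set.Icc (0:ℝ) 1, FoldAux.sden l p y ≠ ⊤ := by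
    intro y hy
    have h1 := FoldAux.sden_le_sden_add hl p hy hy₀mem
    exact (h1.trans_lt (ENNReal.add_lt_top.mpr ⟨hy₀fin, ENNReal.div_lt_top hVne hlne⟩)).ne
  set F : ℝ → ℝ := fun y => (FoldAux.sden l p y).toReal with hF
  have hVl : (V / (l:ℝ≥0∞)).toReal = V.toReal / l := by
    rw [ENNReal.toReal_div]; simp
  have hosc : ∀ y ∈ Set.Icc (0:ℝ) 1, ∀ y' ∈ Set.Icc (0:ℝ) 1,
      |F y - F y'| ≤ V.toReal / l := by
    have key : ∀ y ∈ Set.Icc (0:ℝ) 1, ∀ y' ∈ Set.Icc (0:ℝ) 1,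
        F y ≤ F y' + V.toReal / l := by
      intro y hy y' hy'
      have h1 := FoldAux.sden_le_sden_add hl p hy hy'
      have h2 : FoldAux.sden l p y' + V / l ≠ ⊤ :=
        ENNReal.add_ne_top.mpr ⟨hfin y' hy', hdivne⟩
      have h3 := ENNReal.toReal_mono h2 h1
      rwa [ENNReal.toReal_add (hfin y' hy') hdivne, hVl] at h3
    intro y hy y' hy'
    have k1 := key y hy y' hy'
    have k2 := key y' hy' y hy
    rw [abs_sub_le_iff]
    constructor <;> linarith
  have hFint : IntegrableOn F (Set.Icc (0:ℝ) 1) :=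
    integrable_toReal_of_lintegral_ne_top (FoldAux.sden_measurable hmeas).aemeasurable
      (by rw [hmass]; exact ENNReal.one_ne_top)
  have hvol : volume (Set.Icc (0:ℝ) 1) = 1 := by simp [Real.volume_Icc]
  have hvolR : (volume (Set.Icc (0:ℝ) 1)).toReal = 1 := by rw [hvol]; simp
  have hFone : ∫ y in Set.Icc (0:ℝ) 1, F y = 1 := by
    rw [integral_toReal (FoldAux.sden_measurable hmeas).aemeasurable
      ((ae_restrict_mem measurableSet_Icc).mono fun y hy =>
        lt_top_iff_ne_top.mpr (hfin y hy)), hmass]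
    simp
  have hpt : ∀ y ∈ Set.Icc (0:ℝ) 1, |F y - 1| ≤ V.toReal / l := by
    intro y hy
    have hconst : ∫ _ in Set.Icc (0:ℝ) 1, F y = F y := by
      rw [setIntegral_const, measureReal_def, hvolR, one_smul]
    have hsub : ∫ y' in Set.Icc (0:ℝ) 1, (F y - F y') = F y - 1 := by
      rw [integral_sub (integrableOn_const (C := F y) (by rw [hvol]; exact ENNReal.one_ne_top))
        hFint, hconst, hFone]
    calc |F y - 1| = ‖∫ y' in Set.Icc (0:ℝ) 1, (F y - F y')‖ := by
          rw [hsub, Real.norm_eq_abs]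
      _ ≤ (V.toReal / l) * (volume (Set.Icc (0:ℝ) 1)).toReal := by
          apply norm_setIntegral_le_of_norm_le_const (by rw [hvol]; exact ENNReal.one_lt_top)
          · intro y' hy'
            rw [Real.norm_eq_abs]
            exact hosc y hy y' hy'
      _ = V.toReal / l := by rw [hvolR, mul_one]
  -- rewrite the goal
  rw [hmap]
  have hrn := Measure.rnDeriv_withDensity volume hQm
  have hcong : ∀ᵐ x ∂(volume.restrict (Set.Icc (0:ℝ) 1)),
      |(((volume.withDensity ((Set.Icc (0:ℝ) 1).indicator (FoldAux.sden l p))).rnDeriv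
        volume) x).toReal - 1| = |F x - 1| := by
    filter_upwards [ae_restrict_of_ae hrn, ae_restrict_mem measurableSet_Icc] with x h1 h2
    rw [h1, Set.indicator_of_mem h2]
  rw [integral_congr_ae hcong]
  have hnn : 0 ≤ ∫ x in Set.Icc (0:ℝ) 1, |F x - 1| :=
    integral_nonneg fun x => abs_nonneg _
  have hmain : ∫ x in Set.Icc (0:ℝ) 1, |F x - 1| ≤ V.toReal / l := by
    calc ∫ x in Set.Icc (0:ℝ) 1, |F x - 1| = ‖∫ x in Set.Icc (0:ℝ) 1, |F x - 1|‖ :=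
          (Real.norm_of_nonneg hnn).symm
      _ ≤ (V.toReal / l) * (volume (Set.Icc (0:ℝ) 1)).toReal := by
          apply norm_setIntegral_le_of_norm_le_const (by rw [hvol]; exact ENNReal.one_lt_top)
          · intro x hx
            rw [Real.norm_eq_abs, abs_abs]
            exact hpt x hx
      _ = V.toReal / l := by rw [hvolR, mul_one]
  refine hmain.trans ?_
  have hVnn : 0 ≤ V.toReal := ENNReal.toReal_nonneg
  gcongr
  linarith
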